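/- arXiv:1908.02098 — 2 statements merged into one kernel-verified Lean document; each statement's English description precedes it below -/
import Mathlib

section
/- If I_n(ε_1,…,ε_n) is a full cylinder and (ε'_1,…,ε'_m) is any admissible word, then |I_{n+m}(ε_1,…,ε_n,ε'_1,…,ε'_m)| = |I_n(ε_1,…,ε_n)| · |I_m(ε'_1,…,ε'_m)|. In particular, the concatenation of two full words is a full word. -/
open MeasureTheory Filter Real Set

noncomputable section

/-- The β-transformation `x ↦ βx mod 1`. -/
def bT (β x : ℝ) : ℝ := Int.fract (β * x)

/-- The digit `ε_{j+1}(x, β) = ⌊β T_β^j x⌋` (0-indexed). -/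
def dig (β x : ℝ) (j : ℕ) : ℤ := ⌊β * (bT β)^[j] x⌋

/-- A finite word is admissible if it is the initial digit string of some `x ∈ [0,1)`. -/
def Adm (β : ℝ) (w : List ℤ) : Prop :=
  ∃ x ∈ Set.Ico (0:ℝ) 1, ∀ i : Fin w.length, dig β x i = w.get i

/-- The set `Σ_β^n` of admissible words of length `n`. -/
def SigmaB (β : ℝ) (n : ℕ) : Set (List ℤ) := {w | w.length = n ∧ Adm β w}

/-- The cylinder of a word. -/
def cyl (β : ℝ) (w : List ℤ) : Set ℝ :=
  {x | x ∈ Set.Ico (0:ℝ) 1 ∧ ∀ i : Fin w.length, dig β x i = w.get i}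

/-- The length of a cylinder. -/
def cylLen (β : ℝ) (w : List ℤ) : ℝ := (volume (cyl β w)).toReal

/-- A word/cylinder is full if the cylinder has maximal length `β^{-n}`. -/
def IsFull (β : ℝ) (w : List ℤ) : Prop := cylLen β w = (β ^ w.length)⁻¹

/-- The left endpoint `Σ_j ε_j β^{-j}` of the cylinder of a word. -/
def leftpt (β : ℝ) (w : List ℤ) : ℝ :=
  ∑ i : Fin w.length, (w.get i : ℝ) / β ^ ((i : ℕ) + 1)

/-- Birkhoff (ergodic) sum `S_n f(x)`. -/
def birk (β : ℝ) (f : ℝ → ℝ) (n : ℕ) (x : ℝ) : ℝ :=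
  ∑ j ∈ Finset.range n, f ((bT β)^[j] x)

/-- The digit sequence of `1`. -/
def eps1 (β : ℝ) (j : ℕ) : ℤ := ⌊β * (bT β)^[j] 1⌋

/-- The infinite β-expansion of `1`. -/
def epsStar (β : ℝ) : ℕ → ℤ := by
  classical
  exact
  if h : ∃ m, eps1 β m ≠ 0 ∧ ∀ k, m < k → eps1 β k = 0 then
    fun j =>
      if j % (h.choose + 1) = h.choose then eps1 β h.choose - 1
      else eps1 β (j % (h.choose + 1))
  else eps1 β

/-- Strict lexicographic order on integer sequences. -/
def lexLt (a b : ℕ → ℤ) : Prop := ∃ k, (∀ j, j < k → a j = b j) ∧ a k < b k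

/-- The partition function `Σ_{w ∈ Σ_β^n} sup_{y ∈ I_n(w)} e^{S_n g(y)}`. -/
def presSum (β : ℝ) (g : ℝ → ℝ) (n : ℕ) : ℝ :=
  ∑' w : SigmaB β n, ⨆ y ∈ cyl β (w : List ℤ), Real.exp (birk β g n y)

/-- The pressure function `P(g, T_β)`. -/
def pressure (β : ℝ) (g : ℝ → ℝ) : ℝ :=
  limUnder Filter.atTop fun n : ℕ => Real.log (presSum β g n) / n


lemma mem_cyl {β : ℝ} {w : List ℤ} {x : ℝ} :
    x ∈ cyl β w ↔ x ∈ Set.Ico (0:ℝ) 1 ∧ ∀ k, (hk : k < w.length) → dig β x k = w[k] := by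
  constructor
  · rintro ⟨h1, h2⟩
    exact ⟨h1, fun k hk => by simpa [List.get_eq_getElem] using h2 ⟨k, hk⟩⟩
  · rintro ⟨h1, h2⟩
    exact ⟨h1, fun i => by simpa [List.get_eq_getElem] using h2 i.1 i.2⟩

lemma dig_iterate (β : ℝ) (n j : ℕ) (x : ℝ) :
    dig β ((bT β)^[n] x) j = dig β x (j + n) := by
  simp [dig, ← Function.iterate_add_apply]

lemma iter_mem {β x : ℝ} (hx : x ∈ Set.Ico (0:ℝ) 1) (n : ℕ) :
    (bT β)^[n] x ∈ Set.Ico (0:ℝ) 1 := by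
  cases n with
  | zero => simpa
  | succ k =>
    rw [Function.iterate_succ_apply']
    exact ⟨Int.fract_nonneg _, Int.fract_lt_one _⟩

lemma leftpt_cons (β : ℝ) (c : ℤ) (w : List ℤ) :
    leftpt β (c :: w) = ((c : ℝ) + leftpt β w) / β := by
  rw [leftpt, leftpt]
  show (∑ i : Fin (w.length + 1), ((c :: w).get i : ℝ) / β ^ ((i : ℕ) + 1)) = _
  rw [Fin.sum_univ_succ, add_div, Finset.sum_div]
  congr 1
  · simp
  · refine Finset.sum_congr rfl fun i _ => ?_
    simp [List.get_eq_getElem, pow_succ, div_div]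

lemma cyl_key {β : ℝ} (hβ : 0 < β) : ∀ (w : List ℤ) (x : ℝ), x ∈ cyl β w →
    x = leftpt β w + (bT β)^[w.length] x / β ^ w.length := by
  intro w
  induction w with
  | nil => intro x _; simp [leftpt]
  | cons c w ih =>
    intro x hx
    obtain ⟨hx1, hx2⟩ := hx
    have h0 : dig β x 0 = c := by simpa [List.get_eq_getElem] using hx2 ⟨0, by simp⟩
    have hbx : bT β x = β * x - c := by
      have hfl : (⌊β * x⌋ : ℤ) = c := by simpa [dig] using h0
      simp [bT, Int.fract, hfl]
    have hmem : bT β x ∈ cyl β w := by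
      refine ⟨⟨Int.fract_nonneg _, Int.fract_lt_one _⟩, fun i => ?_⟩
      have h := hx2 ⟨i.1 + 1, by simpa using Nat.succ_lt_succ i.2⟩
      simpa [dig, Function.iterate_succ_apply, List.get_eq_getElem] using h
    have hw := ih (bT β x) hmem
    rw [← Function.iterate_succ_apply] at hw
    rw [hbx] at hw
    have hβ0 : (β:ℝ) ≠ 0 := ne_of_gt hβ
    have hpow : (β:ℝ) ^ w.length ≠ 0 := pow_ne_zero _ hβ0
    rw [leftpt_cons]
    show x = ((c:ℝ) + leftpt β w) / β + (bT β)^[w.length + 1] x / β ^ (w.length + 1)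
    have heq : ((c:ℝ) + leftpt β w) / β + (bT β)^[w.length + 1] x / β ^ (w.length + 1)
        = ((c:ℝ) + (leftpt β w + (bT β)^[w.length + 1] x / β ^ w.length)) / β := by
      field_simp
      ring
    rw [heq, ← hw]
    field_simp
    ring

lemma measurable_bT (β : ℝ) : Measurable (bT β) :=
  measurable_fract.comp (measurable_id.const_mul β)

lemma measurable_dig (β : ℝ) (j : ℕ) : Measurable fun x => dig β x j :=
  Measurable.floor (((measurable_bT β).iterate j).const_mul β)

lemma measurableSet_cyl (β : ℝ) (w : List ℤ) : MeasurableSet (cyl β w) := by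
  have h : cyl β w = Set.Ico 0 1 ∩ ⋂ i : Fin w.length, (fun x => dig β x i) ⁻¹' {w.get i} := by
    ext x
    simp [cyl, Set.mem_iInter]
  rw [h]
  exact measurableSet_Ico.inter (MeasurableSet.iInter fun i =>
    (measurable_dig β i) (measurableSet_singleton _))


end

theorem stmt5 (β : ℝ) (hβ : 1 < β) (u v : List ℤ) (hu : Adm β u)
    (hufull : IsFull β u) (hv : Adm β v) :
    cylLen β (u ++ v) = cylLen β u * cylLen β v ∧
      (IsFull β v → IsFull β (u ++ v)) := by
  have hβ0 : (0:ℝ) < β := lt_trans one_pos hβ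
  set n := u.length with hn
  set a := leftpt β u with ha
  have hb0 : (0:ℝ) < β ^ n := pow_pos hβ0 n
  have hbne : (β:ℝ) ^ n ≠ 0 := ne_of_gt hb0
  have hinv0 : (0:ℝ) < (β ^ n)⁻¹ := inv_pos.2 hb0
  -- T^n is affine on cyl u
  have hT : ∀ x ∈ cyl β u, (bT β)^[n] x = β ^ n * (x - a) := by
    intro x hx
    have h := cyl_key hβ0 u x hx
    have h2 : x - a = (bT β)^[n] x / β ^ n := by linarith
    rw [h2]
    field_simp
  -- the set identity
  set B : Set ℝ := (fun x => β ^ n * (x - a)) ⁻¹' cyl β v with hB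
  have hset : cyl β (u ++ v) = cyl β u ∩ B := by
    ext x
    constructor
    · intro hx
      obtain ⟨hx1, hx2⟩ := mem_cyl.1 hx
      have hxu : x ∈ cyl β u := by
        refine mem_cyl.2 ⟨hx1, fun k hk => ?_⟩
        have h := hx2 k (by rw [List.length_append]; omega)
        rwa [List.getElem_append_left hk] at h
      refine ⟨hxu, ?_⟩
      show β ^ n * (x - a) ∈ cyl β v
      rw [← hT x hxu]
      refine mem_cyl.2 ⟨iter_mem hx1 n, fun k hk => ?_⟩
      have h := hx2 (n + k) (by rw [List.length_append]; omega)
      rw [List.getElem_append_right (by omega)] at h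
      rw [dig_iterate]
      rw [show k + n = n + k by omega, h]
      congr 1
      omega
    · rintro ⟨hxu, hxv⟩
      have hxv' : (bT β)^[n] x ∈ cyl β v := by
        rw [hT x hxu]; exact hxv
      obtain ⟨hu1, hu2⟩ := mem_cyl.1 hxu
      obtain ⟨hv1, hv2⟩ := mem_cyl.1 hxv'
      refine mem_cyl.2 ⟨hu1, fun k hk => ?_⟩
      rw [List.length_append] at hk
      by_cases hkn : k < n
      · rw [List.getElem_append_left hkn]
        exact hu2 k hkn
      · rw [List.getElem_append_right (by omega)]
        have h := hv2 (k - n) (by omega)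
        rw [dig_iterate, show k - n + n = k by omega] at h
        exact h
  -- cyl u is contained in J with full measure
  set J : Set ℝ := Set.Ico a (a + (β ^ n)⁻¹) with hJ
  have hcylJ : cyl β u ⊆ J := by
    intro x hx
    have h := cyl_key hβ0 u x hx
    have hTm := iter_mem hx.1 n (β := β)
    constructor
    · have : 0 ≤ (bT β)^[n] x / β ^ n := div_nonneg hTm.1 (le_of_lt hb0)
      linarith
    · have h1 : (bT β)^[n] x / β ^ n < (β ^ n)⁻¹ := by
        rw [div_eq_mul_inv]
        calc (bT β)^[n] x * (β ^ n)⁻¹ < 1 * (β ^ n)⁻¹ :=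
          mul_lt_mul_of_pos_right hTm.2 hinv0
        _ = (β ^ n)⁻¹ := one_mul _
      linarith
  have hBJ : B ⊆ J := by
    intro x hx
    have hx' : β ^ n * (x - a) ∈ Set.Ico (0:ℝ) 1 := hx.1
    constructor
    · nlinarith [hx'.1]
    · have h1 : x - a < (β ^ n)⁻¹ := by
        have := hx'.2
        have h2 := mul_lt_mul_of_pos_right this hinv0
        rw [one_mul, mul_comm (β ^ n) (x - a), mul_assoc, mul_inv_cancel₀ hbne, mul_one] at h2
        exact h2
      linarith
  have hvolJ : volume J = ENNReal.ofReal ((β ^ n)⁻¹) := by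
    rw [hJ, Real.volume_Ico]
    congr 1
    ring
  have hfin : volume (cyl β u) ≠ ⊤ := by
    have hle : volume (cyl β u) ≤ volume (Set.Ico (0:ℝ) 1) := measure_mono fun x hx => hx.1
    exact ne_top_of_le_ne_top (by simp [Real.volume_Ico]) hle
  have hvolu : volume (cyl β u) = ENNReal.ofReal ((β ^ n)⁻¹) := by
    have h : (volume (cyl β u)).toReal = (β ^ n)⁻¹ := hufull
    rw [← ENNReal.ofReal_toReal hfin, h]
  have hnull : volume (J \ cyl β u) = 0 := by
    rw [measure_diff hcylJ (measurableSet_cyl β u).nullMeasurableSet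
      (by rw [hvolu]; exact ENNReal.ofReal_ne_top), hvolJ, hvolu, tsub_self]
  have hvolB : volume B = ENNReal.ofReal ((β ^ n)⁻¹) * volume (cyl β v) := by
    have hBeq : B = (β ^ n * ·) ⁻¹' ((· + (-(β ^ n * a))) ⁻¹' cyl β v) := by
      ext x
      simp only [hB, Set.mem_preimage]
      rw [mul_sub, sub_eq_add_neg]
    rw [hBeq, Real.volume_preimage_mul_left hbne, measure_preimage_add_right,
      abs_of_pos hinv0]
  have hkey : volume (cyl β (u ++ v)) = volume B := by
    rw [hset]
    refine le_antisymm (measure_mono Set.inter_subset_right) ?_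
    have h1 : volume B ≤ volume (B ∩ cyl β u) + volume (B \ cyl β u) :=
      measure_le_inter_add_diff _ _ _
    have h2 : volume (B \ cyl β u) = 0 :=
      measure_mono_null (Set.diff_subset_diff_left hBJ) hnull
    rw [h2, add_zero] at h1
    calc volume B ≤ volume (B ∩ cyl β u) := h1
    _ = volume (cyl β u ∩ B) := by rw [Set.inter_comm]
  have hlen : cylLen β (u ++ v) = (β ^ n)⁻¹ * cylLen β v := by
    unfold cylLen
    rw [hkey, hvolB, ENNReal.toReal_mul, ENNReal.toReal_ofReal (le_of_lt hinv0)]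
  constructor
  · rw [hlen, hufull]
  · intro hvfull
    unfold IsFull at hvfull ⊢
    rw [hlen, hvfull, List.length_append, pow_add, mul_inv]
end

section
/- For β > 1, any interval J ⊆ [0,1) of length β^{-l} with l ≥ 1 can be covered by at most 2(l+1) cylinders of order l. -/
open MeasureTheory Filter Real Set

noncomputable section
section lemmas

variable {β : ℝ} (hβ : 1 < β)

lemma bT_nonneg (x : ℝ) : 0 ≤ bT β x := Int.fract_nonneg _
lemma bT_lt_one (x : ℝ) : bT β x < 1 := Int.fract_lt_one _

lemma iter_nonneg {n : ℕ} {x : ℝ} (hx : 0 ≤ x) : 0 ≤ (bT β)^[n] x := by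
  cases n with
  | zero => simpa
  | succ n => rw [Function.iterate_succ_apply']; exact bT_nonneg _

lemma iter_lt_one {n : ℕ} {x : ℝ} (hx : x < 1) : (bT β)^[n] x < 1 := by
  cases n with
  | zero => simpa
  | succ n => rw [Function.iterate_succ_apply']; exact bT_lt_one _

lemma bT_zero : bT β 0 = 0 := by simp [bT]

lemma iter_zero (n : ℕ) : (bT β)^[n] (0:ℝ) = 0 := by
  induction n with
  | zero => rfl
  | succ n ih => rw [Function.iterate_succ_apply', ih, bT_zero]

lemma dig_shift (x : ℝ) (m j : ℕ) : dig β x (m + j) = dig β ((bT β)^[m] x) j := by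
  simp [dig, add_comm m j, Function.iterate_add_apply]

lemma dig_nonneg (hβ : 1 < β) {x : ℝ} (hx : 0 ≤ x) (j : ℕ) : 0 ≤ dig β x j := by
  have := iter_nonneg (β := β) (n := j) hx
  exact Int.floor_nonneg.2 (mul_nonneg (by linarith) this)

lemma dig_zero' (j : ℕ) : dig β 0 j = 0 := by simp [dig, iter_zero]

/-- left endpoint of order-n word of x -/
def Lp (β : ℝ) (n : ℕ) (x : ℝ) : ℝ := ∑ j ∈ Finset.range n, (dig β x j : ℝ) / β ^ (j+1)

lemma Lp_def (n : ℕ) (x : ℝ) : Lp β n x = ∑ j ∈ Finset.range n, (dig β x j : ℝ) / β ^ (j+1) := rfl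

lemma Lp_succ (x : ℝ) (n : ℕ) :
    Lp β (n+1) x = (dig β x 0 : ℝ) / β + Lp β n (bT β x) / β := by
  have h := Finset.sum_range_succ' (fun j => (dig β x j : ℝ) / β ^ (j+1)) n
  rw [Lp_def (n+1), h]
  have key : ∀ j ∈ Finset.range n,
      (dig β x (j+1) : ℝ) / β ^ (j+1+1) = ((dig β (bT β x) j : ℝ) / β ^ (j+1)) / β := by
    intro j _
    have hs : dig β x (j+1) = dig β (bT β x) j := by
      have := dig_shift (β := β) x 1 j
      simpa [add_comm] using this
    rw [hs, pow_succ]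
    ring
  rw [Finset.sum_congr rfl key, ← Finset.sum_div, ← Lp_def, pow_one]
  ring

lemma expansion (hβ : 1 < β) (x : ℝ) (n : ℕ) : x = Lp β n x + (bT β)^[n] x / β ^ n := by
  have hb0 : (0:ℝ) < β := by linarith
  induction n generalizing x with
  | zero => rw [Lp_def]; simp
  | succ n ih =>
    have h1 : x = (dig β x 0 : ℝ) / β + bT β x / β := by
      have : bT β x = β * x - (dig β x 0 : ℝ) := by
        rw [bT, Int.fract]; simp [dig]
      rw [this]
      field_simp
      ring
    rw [Lp_succ, Function.iterate_succ_apply, pow_succ]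
    have h2 := ih (bT β x)
    calc x = (dig β x 0 : ℝ) / β + bT β x / β := h1
    _ = (dig β x 0 : ℝ) / β + (Lp β n (bT β x) + (bT β)^[n] (bT β x) / β ^ n) / β := by rw [← h2]
    _ = _ := by field_simp; ring

lemma Lp_nonneg (hβ : 1 < β) {x : ℝ} (hx : 0 ≤ x) (n : ℕ) : 0 ≤ Lp β n x := by
  apply Finset.sum_nonneg
  intro j _
  have := dig_nonneg hβ hx j
  positivity

lemma Lp_le (hβ : 1 < β) {x : ℝ} (hx : 0 ≤ x) (n : ℕ) : Lp β n x ≤ x := by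
  have h := expansion hβ x n
  have h1 : 0 ≤ (bT β)^[n] x := iter_nonneg hx
  have h2 : (0:ℝ) < β ^ n := by positivity
  nlinarith [div_nonneg h1 h2.le]

lemma Lp_congr {x y : ℝ} {n : ℕ} (h : ∀ i < n, dig β x i = dig β y i) :
    Lp β n x = Lp β n y := by
  apply Finset.sum_congr rfl
  intro j hj
  rw [h j (Finset.mem_range.1 hj)]

lemma iter_eq (hβ : 1 < β) (x : ℝ) (n : ℕ) : (bT β)^[n] x = β ^ n * (x - Lp β n x) := by
  have h := expansion hβ x n
  have h2 : (0:ℝ) < β ^ n := by positivity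
  field_simp at h ⊢
  linarith

/-- key: the left endpoint has the same digits and its orbit hits 0 at time n -/
lemma Lp_spec (hβ : 1 < β) (x : ℝ) (n : ℕ) :
    (∀ i < n, dig β (Lp β n x) i = dig β x i) ∧ (bT β)^[n] (Lp β n x) = 0 := by
  have hb0 : (0:ℝ) < β := by linarith
  induction n generalizing x with
  | zero => exact ⟨fun i hi => absurd hi (Nat.not_lt_zero i), by rw [Lp_def]; simp⟩
  | succ n ih =>
    set y := Lp β (n+1) x with hy
    set e := dig β x 0 with he
    set t := Lp β n (bT β x) with ht
    have hby : β * y = (e : ℝ) + t := by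
      rw [hy, Lp_succ]; field_simp; rfl
    have ht0 : 0 ≤ t := Lp_nonneg hβ (bT_nonneg _) n
    have ht1 : t < 1 := lt_of_le_of_lt (Lp_le hβ (bT_nonneg _) n) (bT_lt_one _)
    have hfl : ⌊β * y⌋ = e := by
      rw [hby, Int.floor_intCast_add, Int.floor_eq_zero_iff.2 ⟨ht0, ht1⟩, add_zero]
    have hTy : bT β y = t := by
      rw [bT, Int.fract, hfl, hby]; push_cast; ring
    obtain ⟨ihd, ihz⟩ := ih (bT β x)
    constructor
    · intro i hi
      cases i with
      | zero =>
        show ⌊β * (bT β)^[0] y⌋ = dig β x 0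
        exact hfl
      | succ i =>
        have h1 : dig β y (i+1) = dig β (bT β y) i := by
          have := dig_shift (β := β) y 1 i; simpa [add_comm] using this
        have h2 : dig β x (i+1) = dig β (bT β x) i := by
          have := dig_shift (β := β) x 1 i; simpa [add_comm] using this
        rw [h1, h2, hTy]
        exact ihd i (Nat.succ_lt_succ_iff.mp hi)
    · rw [Function.iterate_succ_apply, hTy]
      exact ihz

lemma self_eq_Lp (hβ : 1 < β) {x : ℝ} {n : ℕ} (h : (bT β)^[n] x = 0) : x = Lp β n x := by
  have := expansion hβ x n
  rw [h] at this; simpa using this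

lemma zero_le_Lp (hβ : 1 < β) {z x : ℝ} {n : ℕ} (hz : (bT β)^[n] z = 0) (hzx : z ≤ x) :
    z ≤ Lp β n x := by
  have hb0 : (0:ℝ) < β := by linarith
  induction n generalizing z x with
  | zero => simp at hz; rw [Lp_def]; simp [hz]
  | succ n ih =>
    have hz' : (bT β)^[n] (bT β z) = 0 := by
      rw [← Function.iterate_succ_apply]; exact hz
    have hzr : β * z = (⌊β * z⌋ : ℝ) + bT β z := by
      rw [bT, Int.fract]; ring
    have hxr : β * x = (⌊β * x⌋ : ℝ) + bT β x := by
      rw [bT, Int.fract]; ring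
    have hTz1 : bT β z < 1 := bT_lt_one _
    have hLnn : 0 ≤ Lp β n (bT β x) := Lp_nonneg hβ (bT_nonneg _) n
    have hLs : β * Lp β (n+1) x = (⌊β * x⌋ : ℝ) + Lp β n (bT β x) := by
      rw [Lp_succ]
      have hbne : β ≠ 0 := by positivity
      field_simp [dig]
      rfl
    have hmul : β * z ≤ β * x := mul_le_mul_of_nonneg_left hzx hb0.le
    have key : β * z ≤ β * Lp β (n+1) x := by
      rcases eq_or_lt_of_le (Int.floor_le_floor (a := β * z) (b := β * x) hmul) with heq | hlt
      · have heq' : (⌊β * z⌋ : ℝ) = (⌊β * x⌋ : ℝ) := by exact_mod_cast heq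
        have hTle : bT β z ≤ bT β x := by
          rw [bT, bT, Int.fract, Int.fract]; rw [heq']; linarith
        have := ih hz' hTle
        linarith
      · have h1 : (⌊β * z⌋ : ℝ) + 1 ≤ (⌊β * x⌋ : ℝ) := by exact_mod_cast hlt
        linarith
    exact le_of_mul_le_mul_left key hb0

lemma iter_small (hβ : 1 < β) {t : ℝ} (ht : 0 ≤ t) {r : ℕ} (h : β ^ r * t < 1) :
    (bT β)^[r] t = β ^ r * t := by
  have hb0 : (0:ℝ) < β := by linarith
  induction r with
  | zero => simp
  | succ r ih =>
    have hr : β ^ r * t < 1 := by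
      have h2 : β ^ r * t ≤ β ^ (r+1) * t :=
        mul_le_mul_of_nonneg_right (pow_le_pow_right₀ (by linarith) (Nat.le_succ r)) ht
      linarith
    rw [Function.iterate_succ_apply', ih hr, bT, ← mul_assoc, ← pow_succ']
    rw [Int.fract_eq_self.2 ⟨by positivity, h⟩]

lemma dig_small (hβ : 1 < β) {t : ℝ} (ht : 0 ≤ t) {r : ℕ} (h : β ^ (r+1) * t < 1) :
    dig β t r = 0 := by
  have hb0 : (0:ℝ) < β := by linarith
  have hr : β ^ r * t < 1 := by
    have h2 : β ^ r * t ≤ β ^ (r+1) * t :=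
      mul_le_mul_of_nonneg_right (pow_le_pow_right₀ (by linarith) (Nat.le_succ r)) ht
    linarith
  rw [dig, iter_small hβ ht hr, ← mul_assoc, ← pow_succ']
  exact Int.floor_eq_zero_iff.2 ⟨by positivity, h⟩

lemma zeros_digs_ne (hβ : 1 < β) {x y : ℝ} {n : ℕ} (hx : (bT β)^[n] x = 0)
    (hy : (bT β)^[n] y = 0) (hne : x ≠ y) : ∃ i < n, dig β x i ≠ dig β y i := by
  by_contra h
  push_neg at h
  exact hne (by rw [self_eq_Lp hβ hx, self_eq_Lp hβ hy, Lp_congr h])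

lemma crossing (hβ : 1 < β) {m : ℕ} {y y' : ℝ}
    (hy : (bT β)^[m] y = 0) (hyy' : y < y')
    (hconst : ∀ x, y ≤ x → x < y' → ∀ i < m, dig β x i = dig β y i)
    (hne : ∃ i < m, dig β y' i ≠ dig β y i)
    (hgap : y' - y < (β ^ m)⁻¹) :
    ∃ m', 1 ≤ m' ∧ m' + 1 ≤ m ∧ (bT β)^[m'] y' = 0 := by
  have hb0 : (0:ℝ) < β := by linarith
  classical
  -- first disagreement index
  have hex : ∃ i, dig β y' i ≠ dig β y i ∧ i < m := by
    obtain ⟨i, h1, h2⟩ := hne; exact ⟨i, h2, h1⟩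
  set j := Nat.find hex with hj
  obtain ⟨hjne, hjm⟩ := Nat.find_spec hex
  have hagree : ∀ i < j, dig β y' i = dig β y i := by
    intro i hi
    by_contra hcon
    exact Nat.find_min hex hi ⟨hcon, hi.trans hjm⟩
  set Lj := Lp β j y with hLj
  set w := dig β y j with hw
  have hbp : (0:ℝ) < β ^ (j+1) := by positivity
  have hLy' : Lp β j y' = Lj := Lp_congr hagree
  have hTj' : (bT β)^[j] y' = β ^ j * (y' - Lj) := by
    rw [iter_eq hβ y' j, hLy']
  have hTjy : (bT β)^[j] y = β ^ j * (y - Lj) := iter_eq hβ y j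
  have hw_le : (w:ℝ) ≤ β * (β ^ j * (y - Lj)) := by
    rw [← hTjy]; exact Int.floor_le _
  have hxlt : ∀ x, y ≤ x → x < y' → β * (β ^ j * (x - Lj)) < (w:ℝ) + 1 := by
    intro x h1 h2
    have hd : dig β x j = w := hconst x h1 h2 j hjm
    have hLx : Lp β j x = Lj := Lp_congr (fun i hi => hconst x h1 h2 i (hi.trans hjm))
    have hfl : β * ((bT β)^[j] x) < (dig β x j : ℝ) + 1 := Int.lt_floor_add_one _
    rw [iter_eq hβ x j, hLx] at hfl
    rw [hd] at hfl
    exact_mod_cast hfl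
  have hle : β ^ (j+1) * (y' - Lj) ≤ (w:ℝ) + 1 := by
    by_contra hcon
    push_neg at hcon
    set c := Lj + ((w:ℝ)+1) / β ^ (j+1) with hc
    have hcy' : c < y' := by
      rw [hc]
      rw [show Lj + ((w:ℝ)+1) / β ^ (j+1) < y' ↔ ((w:ℝ)+1) / β ^ (j+1) < y' - Lj by
        constructor <;> intro <;> linarith]
      rw [div_lt_iff₀ hbp]
      nlinarith
    set x := (max c y + y') / 2 with hx
    have hmx : max c y < y' := max_lt hcy' hyy'
    have hxy' : x < y' := by rw [hx]; linarith
    have hd1 : c ≤ max c y := le_max_left c y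
    have hd2 : y ≤ max c y := le_max_right c y
    have hdx : max c y < x := by rw [hx]; linarith
    have hyx : y ≤ x := hd2.trans hdx.le
    have hcx : c < x := lt_of_le_of_lt hd1 hdx
    have hgtx : (w:ℝ) + 1 < β * (β ^ j * (x - Lj)) := by
      have h3 : ((w:ℝ)+1) / β ^ (j+1) < x - Lj := by
        rw [hc] at hcx; linarith
      rw [div_lt_iff₀ hbp] at h3
      calc (w:ℝ) + 1 < (x - Lj) * β ^ (j+1) := h3
      _ = β * (β ^ j * (x - Lj)) := by rw [pow_succ]; ring
    exact absurd (hxlt x hyx hxy') (not_lt.2 hgtx.le)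
  have hgt : (w:ℝ) < β * (β ^ j * (y' - Lj)) := by
    have : β * (β ^ j * (y - Lj)) < β * (β ^ j * (y' - Lj)) := by
      have hb2 : (0:ℝ) < β * β ^ j := by positivity
      nlinarith
    linarith
  have hps : β * (β ^ j * (y' - Lj)) = β ^ (j+1) * (y' - Lj) := by rw [pow_succ]; ring
  have heq : β * ((bT β)^[j] y') = (w:ℝ) + 1 := by
    rcases lt_or_eq_of_le hle with hlt | he
    · exfalso
      apply hjne
      rw [dig, hTj']
      refine Int.floor_eq_iff.2 ⟨?_, ?_⟩ |>.trans rfl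
      · exact hgt.le
      · push_cast; rw [hps]; exact hlt
    · rw [hTj', hps, he]
  have hiter : (bT β)^[j+1] y' = 0 := by
    rw [Function.iterate_succ_apply', bT, heq]
    have : ((w:ℝ) + 1) = ((w + 1 : ℤ) : ℝ) := by push_cast; ring
    rw [this, Int.fract_intCast]
  refine ⟨j+1, le_add_self, ?_, hiter⟩
  rcases lt_or_eq_of_le (Nat.succ_le_of_lt hjm) with h | h
  · exact Nat.succ_le_of_lt h
  · exfalso
    have hym : (bT β)^[m] y = 0 := hy
    rw [← h, Function.iterate_succ_apply', bT] at hym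
    have hfr : β * ((bT β)^[j] y) = (w:ℝ) := by
      have h2 : β * ((bT β)^[j] y) - ⌊β * ((bT β)^[j] y)⌋ = 0 := by
        rw [Int.fract] at hym
        exact_mod_cast hym
      have h3 : (⌊β * ((bT β)^[j] y)⌋ : ℝ) = (w:ℝ) := by exact_mod_cast rfl
      linarith
    rw [hTjy] at hfr
    have hys : β ^ (j+1) * (y - Lj) = (w:ℝ) := by rw [pow_succ]; rw [← hfr]; ring
    have hys' : β ^ (j+1) * (y' - Lj) = (w:ℝ) + 1 := by
      rw [← hps, ← hTj', heq]
    have hjm1 : j + 1 = m := h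
    have hgap' : y' - y < (β ^ (j+1))⁻¹ := by rw [hjm1]; exact hgap
    have hdiff : β ^ (j+1) * (y' - y) = 1 := by nlinarith [hys, hys']
    have hmul := mul_lt_mul_of_pos_left hgap' hbp
    rw [mul_inv_cancel₀ (ne_of_gt hbp)] at hmul
    linarith

lemma step (hβ : 1 < β) {l m : ℕ} {y y' : ℝ} (hm1 : 1 ≤ m) (hml : m ≤ l)
    (hzy : (bT β)^[m] y = 0) (hzy' : (bT β)^[l] y' = 0)
    (hyy' : y < y') (hgap : y' - y < (β ^ l)⁻¹)
    (hconst : ∀ x, y ≤ x → x < y' → ∀ i < l, dig β x i = dig β y i) :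
    ∃ m', 1 ≤ m' ∧ m' + 1 ≤ m ∧ (bT β)^[m'] y' = 0 := by
  have hb0 : (0:ℝ) < β := by linarith
  have hbl : (0:ℝ) < β ^ l := by positivity
  have hbm : (0:ℝ) < β ^ m := by positivity
  have hzyl : (bT β)^[l] y = 0 := by
    have : l = (l - m) + m := (Nat.sub_add_cancel hml).symm
    rw [this, Function.iterate_add_apply, hzy, iter_zero]
  -- words of order m differ at y and y'
  have hne : ∃ i < m, dig β y' i ≠ dig β y i := by
    by_contra hcon
    push_neg at hcon
    -- then all order-l digits agree, contradicting distinct zeros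
    have hLm : Lp β m y' = Lp β m y := Lp_congr hcon
    have hyL : y = Lp β m y := self_eq_Lp hβ hzy
    have hTm' : (bT β)^[m] y' = β ^ m * (y' - y) := by
      rw [iter_eq hβ y' m, hLm, ← hyL]
    have hTnn : 0 ≤ y' - y := by linarith
    have hsmall : ∀ r, r < l - m → dig β y' (m + r) = 0 := by
      intro r hr
      rw [dig_shift, hTm']
      apply dig_small hβ (by positivity)
      have h1 : β ^ (r+1) * (β ^ m * (y' - y)) = β ^ (r+1+m) * (y' - y) := by
        rw [pow_add]; ring
      rw [h1]
      have h2 : β ^ (r+1+m) ≤ β ^ l := pow_le_pow_right₀ hβ.le (by omega)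
      have h3 : β ^ (r+1+m) * (y' - y) ≤ β ^ l * (y' - y) :=
        mul_le_mul_of_nonneg_right h2 hTnn
      have h4 : β ^ l * (y' - y) < β ^ l * (β ^ l)⁻¹ := mul_lt_mul_of_pos_left hgap hbl
      rw [mul_inv_cancel₀ (ne_of_gt hbl)] at h4
      linarith
    have hzero : ∀ r, r < l - m → dig β y (m + r) = 0 := by
      intro r hr
      rw [dig_shift, hzy, dig_zero']
    have hall : ∀ i < l, dig β y' i = dig β y i := by
      intro i hi
      rcases Nat.lt_or_ge i m with h | h
      · exact hcon i h
      · obtain ⟨r, rfl⟩ : ∃ r, i = m + r := ⟨i - m, by omega⟩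
        rw [hsmall r (by omega), hzero r (by omega)]
    exact absurd (by rw [self_eq_Lp hβ hzyl, self_eq_Lp hβ hzy', Lp_congr hall] :
      y = y') (ne_of_lt hyy')
  -- apply crossing at order m
  apply crossing hβ hzy hyy' ?_ hne ?_
  · intro x h1 h2 i hi
    exact hconst x h1 h2 i (lt_of_lt_of_le hi hml)
  · have : (β ^ l)⁻¹ ≤ (β ^ m)⁻¹ := by
      apply inv_anti₀ hbm
      exact pow_le_pow_right₀ hβ.le hml
    linarith

lemma zeros_finite (hβ : 1 < β) (l : ℕ) {a b : ℝ} (h0 : 0 ≤ a) (hb1 : b ≤ 1) :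
    Set.Finite {y : ℝ | a ≤ y ∧ y < b ∧ (bT β)^[l] y = 0} := by
  have hb0 : (0:ℝ) < β := by linarith
  set Z := {y : ℝ | a ≤ y ∧ y < b ∧ (bT β)^[l] y = 0} with hZ
  set f : ℝ → (Fin l → ℤ) := fun y i => dig β y i with hf
  have hinj : Set.InjOn f Z := by
    intro u hu v hv huv
    obtain ⟨hu1, hu2, hu3⟩ := hu
    obtain ⟨hv1, hv2, hv3⟩ := hv
    rw [self_eq_Lp hβ hu3, self_eq_Lp hβ hv3]
    apply Lp_congr
    intro i hi
    exact congrFun huv ⟨i, hi⟩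
  have himg : f '' Z ⊆ Set.pi Set.univ (fun _ : Fin l => Set.Icc (0:ℤ) ⌊β⌋) := by
    rintro - ⟨y, ⟨hy1, hy2, _⟩, rfl⟩
    intro i _
    have hynn : 0 ≤ y := le_trans h0 hy1
    have hy1' : y < 1 := lt_of_lt_of_le hy2 hb1
    have ht0 : 0 ≤ (bT β)^[(i:ℕ)] y := iter_nonneg hynn
    have ht1 : (bT β)^[(i:ℕ)] y < 1 := iter_lt_one hy1'
    constructor
    · exact dig_nonneg hβ hynn i
    · apply Int.floor_le_floor
      nlinarith
  exact Set.Finite.of_finite_image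
    (Set.Finite.subset (Set.Finite.pi (fun _ => Set.finite_Icc _ _)) himg) hinj

lemma card_zeros (hβ : 1 < β) {l : ℕ} (hl : 1 ≤ l) {a b : ℝ}
    (hab : b - a = (β ^ l)⁻¹) (h0 : 0 ≤ a) (hb1 : b ≤ 1) :
    ((zeros_finite hβ l h0 hb1).toFinset).card ≤ l := by
  have hb0 : (0:ℝ) < β := by linarith
  set Z := {y : ℝ | a ≤ y ∧ y < b ∧ (bT β)^[l] y = 0} with hZ
  set s := (zeros_finite hβ l (a := a) (b := b) h0 hb1).toFinset with hs
  by_contra hcard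
  push_neg at hcard
  have hcard' : l + 1 ≤ s.card := hcard
  set e := s.orderIsoOfFin rfl with he
  have hmem : ∀ i : Fin s.card, (e i : ℝ) ∈ Z := by
    intro i
    exact (Set.Finite.mem_toFinset _).mp (e i).2
  have hmono : ∀ p q : Fin s.card, p < q → (e p : ℝ) < (e q : ℝ) := by
    intro p q hpq
    exact e.strictMono hpq
  -- the constancy of digits between consecutive zeros
  have hconst : ∀ p q : Fin s.card, (q : ℕ) = (p : ℕ) + 1 →
      ∀ x, (e p : ℝ) ≤ x → x < (e q : ℝ) → ∀ i < l, dig β x i = dig β (e p : ℝ) i := by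
    intro p q hpq x h1 h2 i hi
    obtain ⟨hp1, hp2, hp3⟩ := hmem p
    obtain ⟨hq1, hq2, hq3⟩ := hmem q
    set z := Lp β l x with hz
    have hz3 : (bT β)^[l] z = 0 := (Lp_spec hβ x l).2
    have hzge : (e p : ℝ) ≤ z := zero_le_Lp hβ hp3 h1
    have hzle : z ≤ x := Lp_le hβ (le_trans (le_trans h0 hp1) h1) l
    have hzZ : z ∈ Z := ⟨le_trans hp1 hzge, lt_of_le_of_lt hzle (lt_of_lt_of_le h2 hq2.le), hz3⟩
    have hzs : z ∈ s := (Set.Finite.mem_toFinset _).mpr hzZ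
    set r := e.symm ⟨z, hzs⟩ with hr
    have hrz : (e r : ℝ) = z := by rw [hr, OrderIso.apply_symm_apply]
    have hrp : r = p := by
      by_contra hne
      rcases lt_or_gt_of_ne hne with hlt | hgt
      · have := hmono r p hlt
        rw [hrz] at this
        linarith
      · have hq_le_r : q ≤ r := by
          have : (p:ℕ) < (r:ℕ) := hgt
          have : (q:ℕ) ≤ (r:ℕ) := by omega
          exact this
        have : (e q : ℝ) ≤ (e r : ℝ) := e.monotone hq_le_r
        rw [hrz] at this
        linarith
    have hzp : z = (e p : ℝ) := by rw [← hrz, hrp]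
    have := (Lp_spec hβ x l).1 i hi
    rw [← hz] at this
    rw [← this, hzp]
  -- inductive chain
  have chain : ∀ i : ℕ, 1 ≤ i → i ≤ l → ∀ hi : i < s.card,
      ∃ m, 1 ≤ m ∧ m + i ≤ l ∧ (bT β)^[m] ((e ⟨i, hi⟩ : ℝ)) = 0 := by
    intro i
    induction i with
    | zero => omega
    | succ i ih =>
      intro _ hil hi
      have hip : (i : ℕ) < s.card := lt_trans (Nat.lt_succ_self i) hi
      set p : Fin s.card := ⟨i, hip⟩ with hp
      set q : Fin s.card := ⟨i+1, hi⟩ with hq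
      obtain ⟨hp1, hp2, hp3⟩ := hmem p
      obtain ⟨hq1, hq2, hq3⟩ := hmem q
      have hpq : p < q := by
        simp only [hp, hq, Fin.mk_lt_mk]
        omega
      have hlt : (e p : ℝ) < (e q : ℝ) := hmono p q hpq
      have hgap : (e q : ℝ) - (e p : ℝ) < (β ^ l)⁻¹ := by
        rw [← hab]; linarith
      have hcst := hconst p q rfl
      rcases Nat.eq_zero_or_pos i with rfl | hipos
      · -- base case: use m = l
        obtain ⟨m', hm'1, hm'2, hm'3⟩ := step hβ hl le_rfl hp3 hq3 hlt hgap hcst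
        exact ⟨m', hm'1, by omega, hm'3⟩
      · obtain ⟨m, hm1, hm2, hm3⟩ := ih hipos (by omega) hip
        obtain ⟨m', hm'1, hm'2, hm'3⟩ := step hβ hm1 (by omega) hm3 hq3 hlt hgap hcst
        exact ⟨m', hm'1, by omega, hm'3⟩
  obtain ⟨m, hm1, hm2, _⟩ := chain l hl le_rfl (by omega)
  omega

end lemmas
end

theorem stmt7 (β : ℝ) (hβ : 1 < β) (l : ℕ) (hl : 1 ≤ l) (a b : ℝ)
    (hab : b - a = (β ^ l)⁻¹) (hJ : Set.Ico a b ⊆ Set.Ico (0:ℝ) 1) :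
    ∃ F : Finset (List ℤ), F.card ≤ 2 * (l + 1) ∧ (∀ w ∈ F, w ∈ SigmaB β l) ∧
      Set.Ico a b ⊆ ⋃ w ∈ F, cyl β w := by
  classical
  have hb0 : (0:ℝ) < β := by linarith
  have hbl : (0:ℝ) < β ^ l := by positivity
  have hba : a < b := by
    have : (0:ℝ) < (β ^ l)⁻¹ := by positivity
    linarith
  have haI : a ∈ Set.Ico (0:ℝ) 1 := hJ ⟨le_rfl, hba⟩
  have h0 : 0 ≤ a := haI.1
  have hb1 : b ≤ 1 := by
    by_contra hcon
    push_neg at hcon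
    have hx : max a 1 ∈ Set.Ico a b := ⟨le_max_left _ _, max_lt (by linarith [haI.2]) hcon⟩
    have := (hJ hx).2
    exact absurd this (not_lt.2 (le_max_right a 1))
  set wd : ℝ → List ℤ := fun x => (List.range l).map (dig β x) with hwd
  have wd_len : ∀ x, (wd x).length = l := by intro x; simp [hwd]
  have wd_get : ∀ x (i : Fin (wd x).length), (wd x).get i = dig β x i := by
    intro x i
    simp [hwd, List.get_eq_getElem]
  set Zfin := (zeros_finite hβ l h0 hb1).toFinset with hZfin
  have hZmem : ∀ y, y ∈ Zfin ↔ (a ≤ y ∧ y < b ∧ (bT β)^[l] y = 0) := by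
    intro y
    rw [hZfin, Set.Finite.mem_toFinset]
    rfl
  set F := insert (wd a) (Zfin.image wd) with hF
  have hcZ : Zfin.card ≤ l := card_zeros hβ hl hab h0 hb1
  refine ⟨F, ?_, ?_, ?_⟩
  · calc F.card ≤ (Zfin.image wd).card + 1 := Finset.card_insert_le _ _
    _ ≤ Zfin.card + 1 := by
        have := Finset.card_image_le (s := Zfin) (f := wd)
        omega
    _ ≤ l + 1 := by omega
    _ ≤ 2 * (l + 1) := by omega
  · intro w hw
    have : ∃ y, y ∈ Set.Ico (0:ℝ) 1 ∧ w = wd y := by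
      rw [hF, Finset.mem_insert] at hw
      rcases hw with rfl | hw
      · exact ⟨a, haI, rfl⟩
      · obtain ⟨y, hy, rfl⟩ := Finset.mem_image.1 hw
        obtain ⟨hy1, hy2, _⟩ := (hZmem y).1 hy
        exact ⟨y, hJ ⟨hy1, hy2⟩, rfl⟩
    obtain ⟨y, hy01, rfl⟩ := this
    refine ⟨wd_len y, y, hy01, ?_⟩
    intro i
    exact (wd_get y i).symm
  · intro x hx
    have hx01 := hJ hx
    set z := Lp β l x with hz
    have hz0 : (bT β)^[l] z = 0 := (Lp_spec hβ x l).2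
    have hdig : ∀ i < l, dig β z i = dig β x i := (Lp_spec hβ x l).1
    have hzle : z ≤ x := Lp_le hβ hx01.1 l
    have hwdF : wd z ∈ F := by
      rcases le_or_gt a z with hcase | hcase
      · apply Finset.mem_insert_of_mem
        apply Finset.mem_image_of_mem
        exact (hZmem z).2 ⟨hcase, lt_of_le_of_lt hzle hx.2, hz0⟩
      · -- z < a : then z equals the left point of a
        have hLa0 : (bT β)^[l] (Lp β l a) = 0 := (Lp_spec hβ a l).2
        have h1 : Lp β l a ≤ z := by
          have : Lp β l a ≤ x := le_trans (Lp_le hβ h0 l) (le_trans hx.1 le_rfl)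
          exact zero_le_Lp hβ hLa0 (le_trans (Lp_le hβ h0 l) hx.1)
        have h2 : z ≤ Lp β l a := zero_le_Lp hβ hz0 hcase.le
        have hzeq : z = Lp β l a := le_antisymm h2 h1
        have : wd z = wd a := by
          apply List.ext_getElem (by simp [hwd])
          intro i hi1 hi2
          simp only [hwd, List.getElem_map, List.getElem_range]
          have hil : i < l := by simpa [hwd] using hi1
          rw [hzeq]
          exact (Lp_spec hβ a l).1 i hil
        rw [this, hF]
        exact Finset.mem_insert_self _ _
    apply Set.mem_biUnion hwdF
    refine ⟨hx01, ?_⟩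
    intro i
    have hil : (i : ℕ) < l := by
      have := i.2
      simpa [wd_len] using this
    rw [wd_get z i]
    exact (hdig i hil).symm
end
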